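/- For every permutation σ of {1, …, r} there exists a Richardson flag (E_k)_{0 ≤ k ≤ r} for X such that dim_F(E_k/E_{k−1}) = Σ_{j∈J, j ≥ σ(k)} d_j for every 1 ≤ k ≤ r. -/

import Mathlib

/-- Index type of the standard basis `e(i,j,k)`: triples `(i,j,k)` with
`1 ≤ i ≤ j ≤ r`, `1 ≤ k ≤ d j` (so in particular `d j ≠ 0`, i.e. `j ∈ J`). -/
def RIdx (r : ℕ) (d : ℕ → ℕ) : Type :=
  {x : ℕ × ℕ × ℕ //
    1 ≤ x.1 ∧ x.1 ≤ x.2.1 ∧ x.2.1 ≤ r ∧ 1 ≤ x.2.2 ∧ x.2.2 ≤ d x.2.1}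

/-- A Richardson flag for `X`: a chain `0 = E_0 ⊆ E_1 ⊆ ⋯ ⊆ E_r = V` with
`X(E_k) ⊆ E_{k−1}` whose multiset of successive quotient dimensions is
`{Σ_{j≥m} d_j : 1 ≤ m ≤ r}`. -/
def IsRichardsonFlag {F : Type*} [Field F] {V : Type*} [AddCommGroup V] [Module F V]
    (X : V →ₗ[F] V) (r : ℕ) (d : ℕ → ℕ) (E : ℕ → Submodule F V) : Prop :=
  E 0 = ⊥ ∧ E r = ⊤ ∧ (∀ k, k < r → E k ≤ E (k + 1)) ∧
    (∀ k, 1 ≤ k → k ≤ r → ∀ v ∈ E k, X v ∈ E (k - 1)) ∧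
    (Finset.Icc 1 r).val.map
        (fun k => Module.finrank F (E k) - Module.finrank F (E (k - 1))) =
      (Finset.Icc 1 r).val.map (fun m => ∑ j ∈ Finset.Icc m r, d j)

noncomputable instance (r : ℕ) (d : ℕ → ℕ) : Fintype (RIdx r d) :=
  Fintype.ofInjective
    (fun x : RIdx r d =>
      ((⟨x.val.1, by have := x.2; omega⟩ : Fin (r + 1)),
       (⟨x.val.2.1, by have := x.2; omega⟩ : Fin (r + 1)),
       (⟨x.val.2.2, by
          have h := x.2
          have : d x.val.2.1 ≤ (Finset.range (r + 1)).sup d :=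
            Finset.le_sup (Finset.mem_range.mpr (by omega))
          omega⟩ : Fin ((Finset.range (r + 1)).sup d + 1))))
    (by
      intro a b h
      simp only [Prod.mk.injEq, Fin.mk.injEq] at h
      exact Subtype.ext (by ext <;> tauto))

namespace Stmt7

/-- `S r σ j` is the set of positions `m ∈ [1,r]` with `σ m ≤ j`. -/
def S (r : ℕ) (σ : Equiv.Perm ℕ) (j : ℕ) : Finset ℕ :=
  (Finset.Icc 1 r).filter (fun m => σ m ≤ j)

lemma mem_S {r : ℕ} {σ : Equiv.Perm ℕ} {j m : ℕ} :
    m ∈ S r σ j ↔ (1 ≤ m ∧ m ≤ r) ∧ σ m ≤ j := by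
  simp [S, Finset.mem_filter, Finset.mem_Icc]

lemma image_Icc {r : ℕ} {σ : Equiv.Perm ℕ}
    (hσ : ∀ k ∈ Finset.Icc 1 r, σ k ∈ Finset.Icc 1 r) :
    (Finset.Icc 1 r).image σ = Finset.Icc 1 r := by
  apply Finset.eq_of_subset_of_card_le
  · intro m hm
    obtain ⟨k, hk, rfl⟩ := Finset.mem_image.mp hm
    exact hσ k hk
  · rw [Finset.card_image_of_injective _ σ.injective]

lemma card_S {r : ℕ} {σ : Equiv.Perm ℕ}
    (hσ : ∀ k ∈ Finset.Icc 1 r, σ k ∈ Finset.Icc 1 r) {j : ℕ} (hj : j ≤ r) :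
    (S r σ j).card = j := by
  have h1 : (S r σ j).image σ = (Finset.Icc 1 r).filter (fun m => m ≤ j) := by
    have := Finset.filter_image (s := Finset.Icc 1 r) (f := ⇑σ) (p := fun m => m ≤ j)
    rw [image_Icc hσ] at this
    exact this.symm
  have h2 : (Finset.Icc 1 r).filter (fun m => m ≤ j) = Finset.Icc 1 j := by
    ext m
    simp only [Finset.mem_filter, Finset.mem_Icc]
    omega
  have h3 := Finset.card_image_of_injective (S r σ j) σ.injective
  rw [h1, h2, Nat.card_Icc] at h3
  omega

/-- The level function: `L r σ i j` is the `i`-th smallest element of `S r σ j`. -/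
noncomputable def L (r : ℕ) (σ : Equiv.Perm ℕ) (i j : ℕ) : ℕ :=
  if h : (S r σ j).card = j ∧ i - 1 < j then
    (S r σ j).orderEmbOfFin h.1 ⟨i - 1, h.2⟩
  else 0

lemma L_eq {r : ℕ} {σ : Equiv.Perm ℕ} {i j : ℕ}
    (h1 : (S r σ j).card = j) (h2 : i - 1 < j) :
    L r σ i j = (S r σ j).orderEmbOfFin h1 ⟨i - 1, h2⟩ :=
  dif_pos ⟨h1, h2⟩

lemma L_mem {r : ℕ} {σ : Equiv.Perm ℕ} {i j : ℕ}
    (h1 : (S r σ j).card = j) (h2 : i - 1 < j) :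
    L r σ i j ∈ S r σ j := by
  rw [L_eq h1 h2]; exact Finset.orderEmbOfFin_mem _ h1 _

lemma L_strict {r : ℕ} {σ : Equiv.Perm ℕ} {i i' j : ℕ}
    (h1 : (S r σ j).card = j) (hi' : 1 ≤ i') (hlt : i' < i) (hi : i - 1 < j) :
    L r σ i' j < L r σ i j := by
  rw [L_eq h1 (by omega), L_eq h1 hi]
  exact ((S r σ j).orderEmbOfFin h1).strictMono (by simp [Fin.lt_def]; omega)

lemma L_surj {r : ℕ} {σ : Equiv.Perm ℕ} {j m : ℕ}
    (h1 : (S r σ j).card = j) (hm : m ∈ S r σ j) :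
    ∃ i, 1 ≤ i ∧ i ≤ j ∧ L r σ i j = m := by
  have : m ∈ Set.range ((S r σ j).orderEmbOfFin h1) := by
    rw [Finset.range_orderEmbOfFin]; exact hm
  obtain ⟨a, ha⟩ := this
  have ha2 := a.2
  refine ⟨a.val + 1, by omega, by omega, ?_⟩
  rw [L_eq h1 (by omega)]
  rw [show (⟨a.val + 1 - 1, by omega⟩ : Fin j) = a from Fin.ext (by simp)]
  exact ha

end Stmt7


open Stmt7

/-- for every permutation `σ` of `{1,…,r}` there is a Richardson flag
for `X` whose successive quotient dimensions are `dim(E_k/E_{k−1}) = Σ_{j ≥ σ(k)} d_j`. -/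
theorem stmt_7 (r : ℕ) (hr : 1 ≤ r) (d : ℕ → ℕ) (hd : 1 ≤ d r)
    (F : Type*) [Field F] [CharZero F] (V : Type*) [AddCommGroup V] [Module F V]
    (e : Module.Basis (RIdx r d) F V) (X : V →ₗ[F] V)
    (hX0 : ∀ x : RIdx r d, x.val.1 = 1 → X (e x) = 0)
    (hXs : ∀ x y : RIdx r d, x.val.1 = y.val.1 + 1 → x.val.2 = y.val.2 →
      X (e x) = e y)
    (σ : Equiv.Perm ℕ) (hσ : ∀ k ∈ Finset.Icc 1 r, σ k ∈ Finset.Icc 1 r) :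
    ∃ E : ℕ → Submodule F V, IsRichardsonFlag X r d E ∧
      ∀ k ∈ Finset.Icc 1 r,
        Module.finrank F (E k) - Module.finrank F (E (k - 1)) =
          ∑ j ∈ Finset.Icc (σ k) r, d j := by
  classical
  -- validity facts for each index
  have hval : ∀ x : RIdx r d, (S r σ x.val.2.1).card = x.val.2.1 ∧
      x.val.1 - 1 < x.val.2.1 := by
    intro x
    have h := x.2
    exact ⟨card_S hσ (by omega), by omega⟩
  -- the level of a basis vector
  set ℓ : RIdx r d → ℕ := fun x => L r σ x.val.1 x.val.2.1 with hℓdef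
  have hℓmem : ∀ x : RIdx r d, ℓ x ∈ S r σ x.val.2.1 := fun x =>
    L_mem (hval x).1 (hval x).2
  have hℓIcc : ∀ x : RIdx r d, 1 ≤ ℓ x ∧ ℓ x ≤ r := fun x =>
    (mem_S.mp (hℓmem x)).1
  -- the flag
  set T : ℕ → Finset (RIdx r d) := fun k => Finset.univ.filter (fun x => ℓ x ≤ k)
    with hTdef
  set E : ℕ → Submodule F V :=
    fun k => Submodule.span F (((T k).image e : Finset V) : Set V) with hEdef
  -- finrank of each piece
  have hfr : ∀ k, Module.finrank F (E k) = (T k).card := by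
    intro k
    have hsub : (((T k).image e : Finset V) : Set V) ⊆ Set.range e :=
      Finset.coe_image_subset_range
    have hli : LinearIndependent F ((↑) : ((T k).image e : Finset V) → V) :=
      ((linearIndepOn_id_range_iff e.injective).mpr e.linearIndependent).mono hsub
    rw [hEdef]
    rw [finrank_span_finset_eq_card hli,
      Finset.card_image_of_injective _ e.injective]
  -- splitting the count at level k
  have hsplit : ∀ k, 1 ≤ k →
      (T k).card = (T (k - 1)).card +
        (Finset.univ.filter (fun x : RIdx r d => ℓ x = k)).card := by
    intro k hk
    rw [← Finset.card_union_of_disjoint (by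
      simp only [Finset.disjoint_left, hTdef, Finset.mem_filter]
      intro x hx hx'
      omega)]
    congr 1
    ext x
    simp only [hTdef, Finset.mem_union, Finset.mem_filter, Finset.mem_univ,
      true_and]
    omega
  -- counting the indices at each level
  have hcount : ∀ m, 1 ≤ m → m ≤ r →
      (Finset.univ.filter (fun x : RIdx r d => ℓ x = m)).card =
        ∑ j ∈ Finset.Icc (σ m) r, d j := by
    intro m hm1 hm2
    have hbij : (Finset.univ.filter (fun x : RIdx r d => ℓ x = m)).card =
        ((Finset.Icc (σ m) r).sigma (fun j => Finset.Icc 1 (d j))).card := by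
      apply Finset.card_bij
        (fun x _ => (⟨x.val.2.1, x.val.2.2⟩ : (_ : ℕ) × ℕ))
      · intro x hx
        simp only [Finset.mem_filter, Finset.mem_univ, true_and] at hx
        have hmem := hℓmem x
        rw [hx] at hmem
        have h2 := (mem_S.mp hmem).2
        have h := x.2
        simp only [Finset.mem_sigma, Finset.mem_Icc]
        omega
      · intro x hx x' hx' hxx
        simp only [Finset.mem_filter, Finset.mem_univ, true_and] at hx hx'
        rw [Sigma.ext_iff] at hxx
        obtain ⟨hj, hk'⟩ := hxx
        simp only at hj hk'
        have hk := eq_of_heq hk'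
        apply Subtype.ext
        have h := x.2
        have h' := x'.2
        have hi : x.val.1 = x'.val.1 := by
          by_contra hne
          have hc := (hval x).1
          have hc' := (hval x').1
          rw [hℓdef] at hx hx'
          simp only at hx hx'
          rw [hj] at hx hc
          rcases lt_or_gt_of_ne hne with hlt | hlt
          · have := L_strict (i := x'.val.1) (i' := x.val.1) hc' (by omega)
              hlt (by omega)
            omega
          · have := L_strict (i := x.val.1) (i' := x'.val.1) hc' (by omega)
              hlt (by omega)
            omega
        ext
        · exact hi
        · exact hj
        · exact hk
      · rintro ⟨j, k⟩ hb
        simp only [Finset.mem_sigma, Finset.mem_Icc] at hb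
        have hσm1 : 1 ≤ σ m := (Finset.mem_Icc.mp (hσ m (Finset.mem_Icc.mpr
          ⟨hm1, hm2⟩))).1
        have hjr : j ≤ r := hb.1.2
        have hmS : m ∈ S r σ j := mem_S.mpr ⟨⟨hm1, hm2⟩, hb.1.1⟩
        obtain ⟨i, hi1, hi2, hi3⟩ := L_surj (card_S hσ hjr) hmS
        refine ⟨⟨(i, j, k), ⟨hi1, hi2, hjr, hb.2.1, hb.2.2⟩⟩, ?_, rfl⟩
        simp only [Finset.mem_filter, Finset.mem_univ, true_and, hℓdef]
        exact Finset.mem_filter.mpr ⟨Finset.mem_univ _, hi3⟩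
    rw [hbij, Finset.card_sigma]
    exact Finset.sum_congr rfl (fun j _ => by rw [Nat.card_Icc]; omega)
  -- the dimension formula
  have hdim : ∀ k ∈ Finset.Icc 1 r,
      Module.finrank F (E k) - Module.finrank F (E (k - 1)) =
        ∑ j ∈ Finset.Icc (σ k) r, d j := by
    intro k hk
    rw [Finset.mem_Icc] at hk
    rw [hfr, hfr, hsplit k hk.1, Nat.add_sub_cancel_left]
    exact hcount k hk.1 hk.2
  refine ⟨E, ⟨?_, ?_, ?_, ?_, ?_⟩, hdim⟩
  · -- E 0 = ⊥
    have : T 0 = ∅ := by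
      apply Finset.filter_eq_empty_iff.mpr
      intro x _
      have := hℓIcc x
      omega
    rw [hEdef]
    simp only [this, Finset.image_empty, Finset.coe_empty, Submodule.span_empty]
  · -- E r = ⊤
    have hTr : T r = Finset.univ := by
      apply Finset.eq_univ_iff_forall.mpr
      intro x
      simp only [hTdef, Finset.mem_filter, Finset.mem_univ, true_and]
      exact (hℓIcc x).2
    rw [hEdef]
    simp only [hTr]
    rw [Finset.coe_image, Finset.coe_univ, Set.image_univ]
    exact e.span_eq
  · -- monotone
    intro k _
    apply Submodule.span_mono
    apply Finset.coe_subset.mpr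
    apply Finset.image_subset_image
    intro x hx
    simp only [hTdef, Finset.mem_filter, Finset.mem_univ, true_and] at hx ⊢
    omega
  · -- X stability
    intro k hk _ v hv
    have hmap : (E k).map X ≤ E (k - 1) := by
      rw [hEdef]
      simp only [Submodule.map_span]
      apply Submodule.span_le.mpr
      rintro _ ⟨w, hw, rfl⟩
      rw [Finset.mem_coe, Finset.mem_image] at hw
      obtain ⟨x, hx, rfl⟩ := hw
      simp only [hTdef, Finset.mem_filter, Finset.mem_univ, true_and] at hx
      by_cases h1 : x.val.1 = 1
      · rw [hX0 x h1]
        exact (Submodule.span F _).zero_mem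
      · have h := x.2
        obtain ⟨y, hyv⟩ : ∃ y : RIdx r d, y.val = (x.val.1 - 1, x.val.2) :=
          ⟨⟨(x.val.1 - 1, x.val.2),
            ⟨show (1:ℕ) ≤ x.val.1 - 1 by omega,
             show x.val.1 - 1 ≤ x.val.2.1 by omega, h.2.2.1, h.2.2.2⟩⟩, rfl⟩
        have hy1 : y.val.1 = x.val.1 - 1 := by rw [hyv]
        have hy2 : y.val.2 = x.val.2 := by rw [hyv]
        have hy21 : y.val.2.1 = x.val.2.1 := congrArg Prod.fst hy2
        rw [hXs x y (by omega) hy2.symm]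
        apply Submodule.subset_span
        rw [Finset.mem_coe, Finset.mem_image]
        refine ⟨y, ?_, rfl⟩
        simp only [hTdef, Finset.mem_filter, Finset.mem_univ, true_and]
        have hstrict : ℓ y < ℓ x := by
          rw [hℓdef]
          simp only []
          rw [hy1, hy21]
          exact L_strict (hval x).1 (by omega) (by omega) (by omega)
        omega
    exact hmap (Submodule.mem_map_of_mem hv)
  · -- multiset condition
    have h1 : (Finset.Icc 1 r).val.map
        (fun k => Module.finrank F (E k) - Module.finrank F (E (k - 1))) =
        (Finset.Icc 1 r).val.map (fun k => ∑ j ∈ Finset.Icc (σ k) r, d j) :=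
      Multiset.map_congr rfl (fun k hk => hdim k hk)
    have h2 : (Finset.Icc 1 r).val.map (fun k => ∑ j ∈ Finset.Icc (σ k) r, d j)
        = ((Finset.Icc 1 r).val.map σ).map (fun m => ∑ j ∈ Finset.Icc m r, d j)
        := by
      rw [Multiset.map_map]
      rfl
    have h3 : (Finset.Icc 1 r).map σ.toEmbedding = Finset.Icc 1 r := by
      rw [Finset.map_eq_image]
      simpa using image_Icc hσ
    have h4 : (Finset.Icc 1 r).val.map σ = (Finset.Icc 1 r).val := by
      conv_rhs => rw [← h3]
      rfl
    rw [h1, h2, h4]
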